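/- arXiv:2105.02370 — 6 statements merged into one kernel-verified Lean document; each statement's English description precedes it below -/
import Mathlib

section
/- Let δ_A be m_a×n_a and δ_B be m_b×n_b matrices over F₂, and let (L,R) with L ∈ F₂^{n_a×n_b}, R ∈ F₂^{m_a×m_b} satisfy δ_A·L + R·δ_B = 0. Then L can be written as K_A + U·δ_B where every column of K_A lies in ker δ_A and U ∈ F₂^{n_a×m_b}, and R can be written as K̄_B + δ_A·V where every row of K̄_B lies in ker δ_Bᵀ and V ∈ F₂^{n_a×m_b}. -/
/-- Every matrix over a field has a generalized inverse: `A * B * A = A`. -/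
lemma exists_ginverse {K : Type*} [Field K] {m n : ℕ}
    (A : Matrix (Fin m) (Fin n) K) :
    ∃ B : Matrix (Fin n) (Fin m) K, A * B * A = A := by
  set f : (Fin n → K) →ₗ[K] (Fin m → K) := Matrix.mulVecLin A with hf
  obtain ⟨p, hp⟩ := Submodule.exists_isCompl (LinearMap.range f)
  set π := (LinearMap.range f).linearProjOfIsCompl p hp
  have hsurj : LinearMap.range f.rangeRestrict = ⊤ :=
    LinearMap.range_rangeRestrict f
  obtain ⟨g, hg⟩ := f.rangeRestrict.exists_rightInverse_of_surjective hsurj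
  refine ⟨Matrix.toLin'.symm (g ∘ₗ π), ?_⟩
  apply Matrix.toLin'.injective
  rw [Matrix.toLin'_mul, Matrix.toLin'_mul]
  have hA : Matrix.toLin' A = f := rfl
  show (Matrix.toLin' A ∘ₗ Matrix.toLin' (LinearMap.toMatrix' (g ∘ₗ π))) ∘ₗ Matrix.toLin' A = Matrix.toLin' A
  rw [Matrix.toLin'_toMatrix', hA]
  refine LinearMap.ext fun x => ?_
  simp only [LinearMap.comp_apply]
  have h1 : π (f x) = ⟨f x, LinearMap.mem_range_self f x⟩ :=
    Submodule.linearProjOfIsCompl_apply_left hp ⟨f x, LinearMap.mem_range_self f x⟩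
  rw [h1]
  have h2 : f.rangeRestrict (g ⟨f x, LinearMap.mem_range_self f x⟩)
      = ⟨f x, LinearMap.mem_range_self f x⟩ := by
    rw [← LinearMap.comp_apply, hg]; rfl
  have h3 : f (g ⟨f x, LinearMap.mem_range_self f x⟩)
      = (f.rangeRestrict (g ⟨f x, LinearMap.mem_range_self f x⟩) : Fin m → K) := rfl
  rw [h3, h2]

/-- Kernel characterization for the syndrome map of the hypergraph product code:
if `δ_A L + R δ_B = 0` then `L = K_A + U δ_B` with all columns of `K_A` in `ker δ_A`,
and `R = K̄_B + δ_A V` with all rows of `K̄_B` in `ker δ_Bᵀ`. -/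
theorem kernel_characterization
    (ma na mb nb : ℕ)
    (δA : Matrix (Fin ma) (Fin na) (ZMod 2))
    (δB : Matrix (Fin mb) (Fin nb) (ZMod 2))
    (L : Matrix (Fin na) (Fin nb) (ZMod 2))
    (R : Matrix (Fin ma) (Fin mb) (ZMod 2))
    (h : δA * L + R * δB = 0) :
    (∃ (KA : Matrix (Fin na) (Fin nb) (ZMod 2)) (U : Matrix (Fin na) (Fin mb) (ZMod 2)),
        L = KA + U * δB ∧ ∀ j, δA.mulVec (fun i => KA i j) = 0) ∧
    (∃ (KB : Matrix (Fin ma) (Fin mb) (ZMod 2)) (V : Matrix (Fin na) (Fin mb) (ZMod 2)),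
        R = KB + δA * V ∧ ∀ i, δB.transpose.mulVec (fun j => KB i j) = 0) := by
  have two : ∀ {p q : ℕ} (X : Matrix (Fin p) (Fin q) (ZMod 2)), X + X = 0 := by
    intro p q X
    ext i j
    simp [Matrix.add_apply, CharTwo.add_self_eq_zero]
  -- δA * L = R * δB
  have hM : δA * L = R * δB := by
    have := congrArg (· + R * δB) h
    simpa [add_assoc, two (R * δB)] using this
  obtain ⟨Ap, hAp⟩ := exists_ginverse δA
  obtain ⟨Bp, hBp⟩ := exists_ginverse δB
  set U : Matrix (Fin na) (Fin mb) (ZMod 2) := Ap * (δA * L) * Bp with hU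
  have key : δA * (U * δB) = δA * L := by
    have h1 : δA * (Ap * (δA * L)) = δA * L := by
      rw [← Matrix.mul_assoc, ← Matrix.mul_assoc, hAp]
    have h2 : (R * δB) * (Bp * δB) = R * δB := by
      rw [Matrix.mul_assoc R δB, ← Matrix.mul_assoc δB Bp δB, hBp]
    calc δA * (U * δB)
        = δA * ((Ap * (δA * L)) * (Bp * δB)) := by rw [hU, Matrix.mul_assoc]
      _ = (δA * (Ap * (δA * L))) * (Bp * δB) := by rw [← Matrix.mul_assoc]
      _ = (δA * L) * (Bp * δB) := by rw [h1]
      _ = (R * δB) * (Bp * δB) := by rw [hM]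
      _ = R * δB := h2
      _ = δA * L := hM.symm
  constructor
  · refine ⟨L + U * δB, U, ?_, ?_⟩
    · rw [add_assoc, two (U * δB), add_zero]
    · intro j
      have hz : δA * (L + U * δB) = 0 := by
        rw [Matrix.mul_add, key, two]
      funext k
      have := congrFun (congrFun hz k) j
      simpa [Matrix.mulVec, Matrix.mul_apply, dotProduct] using this
  · refine ⟨R + δA * U, U, ?_, ?_⟩
    · rw [add_assoc, two (δA * U), add_zero]
    · intro i
      have hz : (R + δA * U) * δB = 0 := by
        rw [Matrix.add_mul, Matrix.mul_assoc, key, hM, two]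
      funext k
      have := congrFun (congrFun hz i) k
      simpa [Matrix.mulVec, Matrix.mul_apply, dotProduct, Matrix.transpose_apply,
        mul_comm] using this
end

section
/- Let δ_A be m_a×n_a and δ_B be m_b×n_b matrices over F₂, and suppose δ_A L + R δ_B = 0 where L ∈ F₂^{n_a×n_b}, R ∈ F₂^{m_a×m_b}. Let V = δ_A·L. Then every column of V lies in the column space of δ_A and every row of V (as a vector in F₂^{n_b}) lies in the row space of δ_B, and consequently there exists U ∈ F₂^{n_a×m_b} with V = δ_A·U·δ_B. -/
/-- If `δ_A L + R δ_B = 0` and `V = δ_A L`, then every column of `V` lies in the column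
space of `δ_A`, every row of `V` lies in the row space of `δ_B`, and hence
`V = δ_A U δ_B` for some `U`. -/
theorem middle_matrix_factorization
    (ma na mb nb : ℕ)
    (δA : Matrix (Fin ma) (Fin na) (ZMod 2))
    (δB : Matrix (Fin mb) (Fin nb) (ZMod 2))
    (L : Matrix (Fin na) (Fin nb) (ZMod 2))
    (R : Matrix (Fin ma) (Fin mb) (ZMod 2))
    (h : δA * L + R * δB = 0) :
    (∀ j, (fun i => (δA * L) i j) ∈ LinearMap.range δA.mulVecLin) ∧
    (∀ i, (fun j => (δA * L) i j) ∈ LinearMap.range δB.transpose.mulVecLin) ∧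
    (∃ U : Matrix (Fin na) (Fin mb) (ZMod 2), δA * L = δA * U * δB) := by
  have hV : δA * L = R * δB := by
    ext i j
    have h2 : (δA * L) i j + (R * δB) i j = 0 := by
      have := congrFun (congrFun h i) j
      simpa using this
    have h3 := eq_neg_of_add_eq_zero_left h2
    rwa [CharTwo.neg_eq] at h3
  refine ⟨?_, ?_, ?_⟩
  · intro j
    exact ⟨fun k => L k j, by
      ext i
      simp [Matrix.mulVecLin_apply, Matrix.mulVec, Matrix.mul_apply, dotProduct]⟩
  · intro i
    refine ⟨fun k => R i k, ?_⟩
    ext j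
    rw [hV]
    simp [Matrix.mulVecLin_apply, Matrix.mulVec, Matrix.vecMul, Matrix.mul_apply,
      dotProduct, Matrix.transpose_apply, mul_comm]
  · set A := δA.mulVecLin with hA
    set B := δB.mulVecLin with hB
    have hcomp : A ∘ₗ L.mulVecLin = R.mulVecLin ∘ₗ B := by
      rw [hA, hB, ← Matrix.mulVecLin_mul, ← Matrix.mulVecLin_mul, hV]
    set g : (Fin nb → ZMod 2) →ₗ[ZMod 2] _ := (LinearMap.ker A).mkQ ∘ₗ L.mulVecLin with hg
    have hker : LinearMap.ker B ≤ LinearMap.ker g := by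
      intro x hx
      have hBx : B x = 0 := hx
      have hLx : A (L.mulVecLin x) = 0 := by
        have := congrFun (congrArg DFunLike.coe hcomp) x
        simp only [LinearMap.comp_apply] at this
        rw [this, hBx, map_zero]
      simpa [hg, Submodule.Quotient.mk_eq_zero] using hLx
    set e := B.quotKerEquivRange with he
    set g' := (LinearMap.ker B).liftQ g hker with hg'
    obtain ⟨h₁, hh₁⟩ :=
      LinearMap.exists_extend (g' ∘ₗ (e.symm : LinearMap.range B →ₗ[ZMod 2] _))
    obtain ⟨s, hs⟩ := LinearMap.exists_rightInverse_of_surjective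
      (LinearMap.ker A).mkQ (Submodule.range_mkQ _)
    set U' : (Fin mb → ZMod 2) →ₗ[ZMod 2] (Fin na → ZMod 2) := s ∘ₗ h₁ with hU'
    refine ⟨LinearMap.toMatrix' U', ?_⟩
    have key : ∀ x, A (U' (B x)) = A (L.mulVecLin x) := by
      intro x
      have h2 : h₁ (B x) = g x := by
        have hx : (⟨B x, LinearMap.mem_range_self B x⟩ : LinearMap.range B) =
            e ((LinearMap.ker B).mkQ x) := by
          apply Subtype.ext
          simp [he, LinearMap.quotKerEquivRange]
        have h1 := congrFun (congrArg DFunLike.coe hh₁) ⟨B x, LinearMap.mem_range_self B x⟩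
        simp only [LinearMap.comp_apply, Submodule.coe_subtype] at h1
        rw [h1, hx]
        simp only [LinearMap.comp_apply, LinearEquiv.coe_coe, LinearEquiv.symm_apply_apply]
        simp [hg']
      have h3 : (LinearMap.ker A).mkQ (U' (B x)) = (LinearMap.ker A).mkQ (L.mulVecLin x) := by
        have hsx := congrFun (congrArg DFunLike.coe hs) (g x)
        simp only [LinearMap.comp_apply, LinearMap.id_apply] at hsx
        simp only [hU', LinearMap.comp_apply, h2]
        rw [hsx]
        rfl
      have h4 : U' (B x) - L.mulVecLin x ∈ LinearMap.ker A := by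
        rwa [← Submodule.Quotient.mk_eq_zero, Submodule.Quotient.mk_sub, sub_eq_zero]
      have h5 : A (U' (B x) - L.mulVecLin x) = 0 := h4
      rw [map_sub, sub_eq_zero] at h5
      exact h5
    apply Matrix.toLin'.injective
    refine LinearMap.ext fun x => ?_
    rw [Matrix.toLin'_apply', Matrix.toLin'_apply', Matrix.mul_assoc, Matrix.mulVecLin_mul,
      Matrix.mulVecLin_mul, Matrix.mulVecLin_mul]
    have hUm : (LinearMap.toMatrix' U' :
        Matrix (Fin na) (Fin mb) (ZMod 2)).mulVecLin = U' := by
      rw [← Matrix.toLin'_apply', Matrix.toLin'_toMatrix']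
    simp only [LinearMap.comp_apply, hUm, ← hA, ← hB]
    exact (key x).symm
end

section
/- Let δ_A be m_a×n_a and δ_B be m_b×n_b matrices over F₂. Let d_a be the minimum Hamming weight of a nonzero vector in ker δ_A. Suppose (L,R) satisfies δ_A L + R δ_B = 0 and there exist a standard unit vector f ∈ F₂^{n_a} and a vector k ∈ ker δ_B such that fᵀ L k = 1. Then the matrix L has at least d_a nonzero rows. -/
/-- Half of Proposition 2: a syndrome-zero `Z`-operator `(L, R)` that anticommutes with
a left logical `X`-operator `f ⊗ k` (with `f` a standard unit vector and `k ∈ ker δ_B`)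
has at least `d_a` nonzero rows in `L`, where `d_a` bounds below the weight of any
nonzero vector in `ker δ_A`. -/
theorem logical_operator_row_weight
    (ma na mb nb : ℕ)
    (δA : Matrix (Fin ma) (Fin na) (ZMod 2))
    (δB : Matrix (Fin mb) (Fin nb) (ZMod 2))
    (da : ℕ)
    (hda : ∀ v : Fin na → ZMod 2, v ≠ 0 → δA.mulVec v = 0 → da ≤ hammingNorm v)
    (L : Matrix (Fin na) (Fin nb) (ZMod 2))
    (R : Matrix (Fin ma) (Fin mb) (ZMod 2))
    (hsyn : δA * L + R * δB = 0)
    (f : Fin na → ZMod 2) (hf : ∃ i₀, f = Pi.single i₀ 1)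
    (k : Fin nb → ZMod 2) (hk : δB.mulVec k = 0)
    (hanti : dotProduct f (L.mulVec k) = 1) :
    da ≤ {i | (fun j => L i j) ≠ 0}.ncard := by
  set v := L.mulVec k with hv
  have hker : δA.mulVec v = 0 := by
    have hAL : δA * L = -(R * δB) := eq_neg_of_add_eq_zero_left hsyn
    rw [hv, Matrix.mulVec_mulVec, hAL]
    have : (-(R * δB)).mulVec k = -((R * δB).mulVec k) := by
      ext i; simp [Matrix.mulVec, dotProduct, Matrix.neg_apply, Finset.sum_neg_distrib]
    rw [this, ← Matrix.mulVec_mulVec, hk, Matrix.mulVec_zero, neg_zero]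
  have hvne : v ≠ 0 := by
    intro h
    rw [h] at hanti
    simp [dotProduct] at hanti
  have hle := hda v hvne hker
  refine hle.trans ?_
  have hsub : {i | v i ≠ 0} ⊆ {i | (fun j => L i j) ≠ 0} := by
    intro i hi
    simp only [Set.mem_setOf_eq] at hi ⊢
    intro h0
    apply hi
    simp only [hv, Matrix.mulVec, dotProduct]
    apply Finset.sum_eq_zero
    intro j _
    have := congrFun h0 j
    simp only [Pi.zero_apply] at this
    simp [this]
  have hfin : {i | (fun j => L i j) ≠ 0}.Finite := Set.toFinite _
  calc hammingNorm v = {i | v i ≠ 0}.ncard := by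
        rw [hammingNorm]
        rw [Set.ncard_eq_toFinset_card']
        congr 1
        ext i
        simp
    _ ≤ _ := Set.ncard_le_ncard hsub hfin
end

section
/- Let δ_A be m_a×n_a and δ_B be m_b×n_b matrices over F₂, with d_a the minimum weight of a nonzero vector in ker δ_A and d_bᵀ the minimum weight of a nonzero vector in ker δ_Bᵀ. Suppose (L,R) satisfies δ_A L + R δ_B = 0, L has fewer than d_a nonzero rows, and R has fewer than d_bᵀ nonzero columns. Then for every standard unit vector f ∈ F₂^{n_a} and every k ∈ ker δ_B we have fᵀ L k = 0, and for every k̄ ∈ ker δ_Aᵀ and every standard unit vector g ∈ F₂^{m_b} we have k̄ᵀ R g = 0. -/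
lemma hammingNorm_le_ncard {n : ℕ} (v : Fin n → ZMod 2) (S : Set (Fin n))
    (h : ∀ i, v i ≠ 0 → i ∈ S) : hammingNorm v ≤ S.ncard := by
  classical
  rw [Set.ncard_eq_toFinset_card']
  unfold hammingNorm
  apply Finset.card_le_card
  intro i hi
  simp only [Finset.mem_filter, Finset.mem_univ, true_and] at hi
  simpa using h i hi

/-- Contrapositive of Proposition 2: a syndrome-zero operator `(L, R)` with fewer than
`d_a` nonzero rows in `L` and fewer than `d_bᵀ` nonzero columns in `R` commutes with
all logical `X`-generators of the hypergraph product code. -/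
theorem low_weight_commutes_with_logicals
    (ma na mb nb : ℕ)
    (δA : Matrix (Fin ma) (Fin na) (ZMod 2))
    (δB : Matrix (Fin mb) (Fin nb) (ZMod 2))
    (da dbT : ℕ)
    (hda : ∀ v : Fin na → ZMod 2, v ≠ 0 → δA.mulVec v = 0 → da ≤ hammingNorm v)
    (hdbT : ∀ w : Fin mb → ZMod 2, w ≠ 0 → δB.transpose.mulVec w = 0 → dbT ≤ hammingNorm w)
    (L : Matrix (Fin na) (Fin nb) (ZMod 2))
    (R : Matrix (Fin ma) (Fin mb) (ZMod 2))
    (hsyn : δA * L + R * δB = 0)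
    (hrowL : {i | (fun j => L i j) ≠ 0}.ncard < da)
    (hcolR : {j | (fun i => R i j) ≠ 0}.ncard < dbT) :
    (∀ (f : Fin na → ZMod 2), (∃ i₀, f = Pi.single i₀ 1) →
      ∀ k : Fin nb → ZMod 2, δB.mulVec k = 0 → dotProduct f (L.mulVec k) = 0) ∧
    (∀ kbar : Fin ma → ZMod 2, δA.transpose.mulVec kbar = 0 →
      ∀ g : Fin mb → ZMod 2, (∃ j₀, g = Pi.single j₀ 1) →
        dotProduct kbar (R.mulVec g) = 0) := by
  constructor
  · intro f _ k hk
    have hLk : L.mulVec k = 0 := by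
      by_contra hne
      have hker : δA.mulVec (L.mulVec k) = 0 := by
        have h1 := congrArg (fun M => M.mulVec k) hsyn
        simpa [Matrix.add_mulVec, ← Matrix.mulVec_mulVec, hk] using h1
      have h2 := hda (L.mulVec k) hne hker
      have h3 : hammingNorm (L.mulVec k) ≤ ({i | (fun j => L i j) ≠ 0} : Set (Fin na)).ncard := by
        apply hammingNorm_le_ncard
        intro i hi
        simp only [Set.mem_setOf_eq]
        intro hrow
        apply hi
        have h0 : ∀ j, L i j = 0 := fun j => congrFun hrow j
        simp [Matrix.mulVec, dotProduct, h0]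
      omega
    rw [hLk]
    simp [dotProduct]
  · intro kbar hkbar g _
    have hw : Matrix.vecMul kbar R = 0 := by
      by_contra hne
      have hkA : Matrix.vecMul kbar δA = 0 := by
        rwa [Matrix.mulVec_transpose] at hkbar
      have hker : δB.transpose.mulVec (Matrix.vecMul kbar R) = 0 := by
        rw [Matrix.mulVec_transpose, Matrix.vecMul_vecMul]
        have h1 : Matrix.vecMul kbar (δA * L) + Matrix.vecMul kbar (R * δB) = 0 := by
          rw [← Matrix.vecMul_add, hsyn, Matrix.vecMul_zero]
        rw [← Matrix.vecMul_vecMul, hkA, Matrix.zero_vecMul, zero_add] at h1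
        exact h1
      have h2 := hdbT (Matrix.vecMul kbar R) hne hker
      have h3 : hammingNorm (Matrix.vecMul kbar R) ≤
          ({j | (fun i => R i j) ≠ 0} : Set (Fin mb)).ncard := by
        apply hammingNorm_le_ncard
        intro j hj
        simp only [Set.mem_setOf_eq]
        intro hcol
        apply hj
        have h0 : ∀ i, R i j = 0 := fun i => congrFun hcol i
        simp [Matrix.vecMul, dotProduct, h0]
      omega
    rw [Matrix.dotProduct_mulVec, hw]
    simp [dotProduct]
end

section
/- Let δ_A be m_a×n_a and δ_B be m_b×n_b matrices over F₂, and fix a complement W_B of im δ_Bᵀ in F₂^{n_b} spanned by standard unit vectors. Suppose (L,R) satisfies δ_A L + R δ_B = 0 and there exist a unit vector f ∈ F₂^{n_a} and k ∈ ker δ_B with fᵀ L k = 1. Write L = M_L + O_L with all rows of M_L in im δ_Bᵀ and all rows of O_L in W_B. Then O_L has at least d_a nonzero rows, where d_a is the minimum weight of a nonzero vector in ker δ_A. -/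
/-- Corollary 1(i): the logical part `O_L` of the left component of a non-trivial
logical `Z`-operator has at least `d_a` nonzero rows (i.e. `L` has at least `d_a`
rows not in `im δ_Bᵀ`). -/
theorem logical_part_row_weight
    (ma na mb nb : ℕ)
    (δA : Matrix (Fin ma) (Fin na) (ZMod 2))
    (δB : Matrix (Fin mb) (Fin nb) (ZMod 2))
    (da : ℕ)
    (hda : ∀ v : Fin na → ZMod 2, v ≠ 0 → δA.mulVec v = 0 → da ≤ hammingNorm v)
    (WB : Submodule (ZMod 2) (Fin nb → ZMod 2))
    (hWB : IsCompl (LinearMap.range δB.transpose.mulVecLin) WB)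
    (hWBunit : ∃ J : Set (Fin nb),
      WB = Submodule.span (ZMod 2) ((fun j => Pi.single j (1 : ZMod 2)) '' J))
    (L ML OL : Matrix (Fin na) (Fin nb) (ZMod 2))
    (R : Matrix (Fin ma) (Fin mb) (ZMod 2))
    (hsyn : δA * L + R * δB = 0)
    (f : Fin na → ZMod 2) (hf : ∃ i₀, f = Pi.single i₀ 1)
    (k : Fin nb → ZMod 2) (hk : δB.mulVec k = 0)
    (hanti : dotProduct f (L.mulVec k) = 1)
    (hdecomp : L = ML + OL)
    (hML : ∀ i, (fun j => ML i j) ∈ LinearMap.range δB.transpose.mulVecLin)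
    (hOL : ∀ i, (fun j => OL i j) ∈ WB) :
    da ≤ {i | (fun j => OL i j) ≠ 0}.ncard := by
  classical
  set v : Fin na → ZMod 2 := L.mulVec k with hv
  -- v is in ker δA
  have hker : δA.mulVec v = 0 := by
    have h1 : (δA * L).mulVec k = 0 := by
      have : (δA * L) = - (R * δB) := by
        rw [eq_neg_iff_add_eq_zero]; exact hsyn
      rw [this]
      have : (R * δB).mulVec k = R.mulVec (δB.mulVec k) := by
        rw [Matrix.mulVec_mulVec]
      simp [Matrix.neg_mulVec, this, hk]
    rw [hv, Matrix.mulVec_mulVec]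
    exact h1
  -- v ≠ 0
  have hvne : v ≠ 0 := by
    intro h0
    rw [h0] at hanti
    simp [dotProduct] at hanti
  have hda' := hda v hvne hker
  -- each row of ML kills k
  have hMLk : ∀ i, dotProduct (fun j => ML i j) k = 0 := by
    intro i
    obtain ⟨w, hw⟩ := hML i
    have : (fun j => ML i j) = Matrix.mulVec δB.transpose w := hw.symm
    rw [this]
    rw [Matrix.mulVec_transpose]
    rw [← Matrix.dotProduct_mulVec]
    rw [hk]
    simp
  -- v i = dotProduct (OL i) k
  have hvOL : ∀ i, v i = dotProduct (fun j => OL i j) k := by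
    intro i
    have : v i = dotProduct (fun j => L i j) k := rfl
    rw [this, hdecomp]
    have : (fun j => (ML + OL) i j) = (fun j => ML i j) + (fun j => OL i j) := by
      ext j; simp [Matrix.add_apply]
    rw [this, add_dotProduct, hMLk i, zero_add]
  -- support of v ⊆ nonzero rows of OL
  refine hda'.trans ?_
  have hfin : {i | (fun j => OL i j) ≠ 0}.Finite := Set.toFinite _
  rw [Set.ncard_eq_toFinset_card' _]
  rw [hammingNorm]
  apply Finset.card_le_card
  intro i hi
  simp only [Finset.mem_filter, Finset.mem_univ, true_and] at hi
  simp only [Set.mem_toFinset, Set.mem_setOf_eq]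
  intro h0
  apply hi
  rw [hvOL i, h0]
  simp
end

section
/- Let δ_A be m_a×n_a and δ_B be m_b×n_b matrices over F₂, with classical minimum distances d_a = min weight of nonzero ker δ_A and d_bᵀ = min weight of nonzero ker δ_Bᵀ. Suppose (L_min, R_min) and (L̃, R̃) both satisfy δ_A L + R δ_B = S for the same S, that the number of rows of L_min outside im δ_Bᵀ is < d_a/2 and the number of columns of R_min outside im δ_A is < d_bᵀ/2, and suppose the same bounds hold for (L̃, R̃). If moreover the rowlog/collog index sets are homology invariants (as established), and (L_min,R_min), (L̃,R̃) differ by a syndrome-zero operator that anticommutes with some logical X-operator (f⊗k,0) with f a unit vector and k ∈ ker δ_B nonzero, then a contradiction follows: the logical part of L_min would have at least d_a/2 nonzero rows. -/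
/-- Core contradiction of Proposition 4 (correctness of ReShape): two valid solutions
of the same syndrome equation, each with logical row-column weight below
`(d_a/2, d_bᵀ/2)`, cannot differ by a syndrome-zero operator anticommuting with a
left logical `X`-operator `(f ⊗ k, 0)`. -/
theorem reshape_contradiction
    (ma na mb nb : ℕ)
    (δA : Matrix (Fin ma) (Fin na) (ZMod 2))
    (δB : Matrix (Fin mb) (Fin nb) (ZMod 2))
    (da dbT : ℕ)
    (hda : ∀ v : Fin na → ZMod 2, v ≠ 0 → δA.mulVec v = 0 → da ≤ hammingNorm v)
    (hdbT : ∀ w : Fin mb → ZMod 2, w ≠ 0 → δB.transpose.mulVec w = 0 → dbT ≤ hammingNorm w)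
    (S : Matrix (Fin ma) (Fin nb) (ZMod 2))
    (Lmin Ltilde : Matrix (Fin na) (Fin nb) (ZMod 2))
    (Rmin Rtilde : Matrix (Fin ma) (Fin mb) (ZMod 2))
    (hmin : δA * Lmin + Rmin * δB = S)
    (htilde : δA * Ltilde + Rtilde * δB = S)
    (hrowmin : 2 * {i | (fun j => Lmin i j) ∉ LinearMap.range δB.transpose.mulVecLin}.ncard < da)
    (hcolmin : 2 * {j | (fun i => Rmin i j) ∉ LinearMap.range δA.mulVecLin}.ncard < dbT)
    (hrowtilde : 2 * {i | (fun j => Ltilde i j) ∉ LinearMap.range δB.transpose.mulVecLin}.ncard < da)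
    (hcoltilde : 2 * {j | (fun i => Rtilde i j) ∉ LinearMap.range δA.mulVecLin}.ncard < dbT)
    (f : Fin na → ZMod 2) (hf : ∃ i₀, f = Pi.single i₀ 1)
    (k : Fin nb → ZMod 2) (hk : δB.mulVec k = 0) (hk0 : k ≠ 0)
    (hanti : dotProduct f ((Lmin + Ltilde).mulVec k) = 1) :
    False := by
  classical
  obtain ⟨i₀, rfl⟩ := hf
  set D : Matrix (Fin na) (Fin nb) (ZMod 2) := Lmin + Ltilde with hD
  set v : Fin na → ZMod 2 := D.mulVec k with hv
  -- δA * D = (Rmin + Rtilde) * δB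
  have hsum : δA * D + (Rmin + Rtilde) * δB = 0 := by
    have : (δA * Lmin + Rmin * δB) + (δA * Ltilde + Rtilde * δB) = S + S := by
      rw [hmin, htilde]
    have hSS : S + S = 0 := by
      ext i j
      simp only [Matrix.add_apply, Matrix.zero_apply]
      exact CharTwo.add_self_eq_zero _
    rw [hSS] at this
    rw [hD, Matrix.mul_add, Matrix.add_mul]
    calc δA * Lmin + δA * Ltilde + (Rmin * δB + Rtilde * δB)
        = (δA * Lmin + Rmin * δB) + (δA * Ltilde + Rtilde * δB) := by abel
      _ = 0 := this
  have heq : δA * D = (Rmin + Rtilde) * δB := by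
    have h2 : δA * D = -((Rmin + Rtilde) * δB) :=
      eq_neg_of_add_eq_zero_left hsum
    rw [h2]
    ext i j
    simp only [Matrix.neg_apply]
    exact CharTwo.neg_eq _
  -- v is in ker δA
  have hker : δA.mulVec v = 0 := by
    rw [hv, Matrix.mulVec_mulVec, heq, ← Matrix.mulVec_mulVec, hk,
      Matrix.mulVec_zero]
  -- v i₀ = 1
  have hvi : v i₀ = 1 := by
    have : dotProduct (Pi.single i₀ (1 : ZMod 2)) v = v i₀ := by
      simp [dotProduct, Pi.single_apply]
    rw [← this]; exact hanti
  have hv0 : v ≠ 0 := fun h => by simp [h] at hvi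
  have hda' := hda v hv0 hker
  -- rows of D in im δBᵀ give zero entries of v
  have hrowzero : ∀ i : Fin na,
      (fun j => D i j) ∈ LinearMap.range δB.transpose.mulVecLin → v i = 0 := by
    intro i hi
    obtain ⟨w, hw⟩ := hi
    have hDi : (fun j => D i j) = δB.transpose.mulVec w := by
      rw [← hw]; rfl
    have : v i = dotProduct (fun j => D i j) k := rfl
    rw [this, hDi, Matrix.mulVec_transpose, ← Matrix.dotProduct_mulVec, hk,
      dotProduct_zero]
  -- support of v
  have hsub : {i | v i ≠ 0} ⊆
      {i | (fun j => Lmin i j) ∉ LinearMap.range δB.transpose.mulVecLin} ∪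
      {i | (fun j => Ltilde i j) ∉ LinearMap.range δB.transpose.mulVecLin} := by
    intro i hi
    by_contra hcon
    simp only [Set.mem_union, Set.mem_setOf_eq, not_or, not_not] at hcon
    obtain ⟨h1, h2⟩ := hcon
    apply hi
    apply hrowzero
    have : (fun j => D i j) = (fun j => Lmin i j) + (fun j => Ltilde i j) := by
      funext j; simp [hD, Matrix.add_apply]
    rw [this]
    exact add_mem h1 h2
  -- counting
  have hnorm : hammingNorm v = {i | v i ≠ 0}.ncard := by
    rw [Set.ncard_eq_toFinset_card']
    simp [hammingNorm, Set.toFinset_setOf]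
  have hcount : hammingNorm v ≤
      {i | (fun j => Lmin i j) ∉ LinearMap.range δB.transpose.mulVecLin}.ncard +
      {i | (fun j => Ltilde i j) ∉ LinearMap.range δB.transpose.mulVecLin}.ncard := by
    rw [hnorm]
    calc {i | v i ≠ 0}.ncard ≤ _ := Set.ncard_le_ncard hsub (Set.toFinite _)
      _ ≤ _ := Set.ncard_union_le _ _
  omega
end
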